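/- For a = ((g₁g₂+1), i(g₁g₂−1), (g₁+g₂), i(g₁−g₂)) with g₁, g₂ holomorphic, the 4×4 determinant of the column vectors (a, ā, a', ā') equals 4(|g₁'|²(|g₂|²−1)² − |g₂'|²(|g₁|²−1)²). -/

import Mathlib

set_option maxHeartbeats 1000000

open Complex

noncomputable def aV (g₁ g₂ : ℂ → ℂ) (t : ℂ) : Fin 4 → ℂ :=
  ![g₁ t * g₂ t + 1, Complex.I * (g₁ t * g₂ t - 1),
    g₁ t + g₂ t, Complex.I * (g₁ t - g₂ t)]

private lemma key (a b a' b' p q p' q' : ℂ) :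
    Matrix.det !![a*b+1, p*q+1, a'*b+a*b', p'*q+p*q';
      Complex.I*(a*b-1), -Complex.I*(p*q-1), Complex.I*(a'*b+a*b'), -Complex.I*(p'*q+p*q');
      a+b, p+q, a'+b', p'+q';
      Complex.I*(a-b), -Complex.I*(p-q), Complex.I*(a'-b'), -Complex.I*(p'-q')]
    = 4*(a'*p'*(b*q-1)^2 - b'*q'*(a*p-1)^2) := by
  simp [Matrix.det_succ_row_zero, Fin.sum_univ_succ, Matrix.submatrix_apply, Fin.succAbove, Matrix.cons_val_succ, Fin.castSucc, Fin.castAdd, Fin.castLE]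
  have hI : Complex.I * Complex.I = -1 := Complex.I_mul_I
  linear_combination (-8*a*p*b'*q' + 8*b*q*a'*p' + 4*a^2*p^2*b'*q' - 4*b^2*q^2*a'*p' - 4*a'*p' + 4*b'*q') * hI

/-- det(a, ā, a', ā') = 4(|g₁'|²(|g₂|²−1)² − |g₂'|²(|g₁|²−1)²). -/
theorem stmt13 (D : Set ℂ) (hD : IsOpen D) (g₁ g₂ : ℂ → ℂ)
    (hg₁ : DifferentiableOn ℂ g₁ D) (hg₂ : DifferentiableOn ℂ g₂ D) :
    ∀ t ∈ D,
      Matrix.det (Matrix.of fun i j : Fin 4 =>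
        ![aV g₁ g₂ t,
          fun k => star (aV g₁ g₂ t k),
          fun k => deriv (fun z => aV g₁ g₂ z k) t,
          fun k => star (deriv (fun z => aV g₁ g₂ z k) t)] j i)
      = ((4 * (Complex.normSq (deriv g₁ t) * (Complex.normSq (g₂ t) - 1)^2
              - Complex.normSq (deriv g₂ t) * (Complex.normSq (g₁ t) - 1)^2) : ℝ) : ℂ) := by
  intro t ht
  have h1 : DifferentiableAt ℂ g₁ t := (hg₁ t ht).differentiableAt (hD.mem_nhds ht)
  have h2 : DifferentiableAt ℂ g₂ t := (hg₂ t ht).differentiableAt (hD.mem_nhds ht)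
  have e0 : deriv (fun z => aV g₁ g₂ z 0) t
      = deriv g₁ t * g₂ t + g₁ t * deriv g₂ t := by
    simp only [aV, Matrix.cons_val_zero]
    rw [deriv_add_const, deriv_fun_mul h1 h2]
  have e1 : deriv (fun z => aV g₁ g₂ z 1) t
      = Complex.I * (deriv g₁ t * g₂ t + g₁ t * deriv g₂ t) := by
    simp only [aV, Matrix.cons_val_one, Matrix.head_cons, Matrix.cons_val_zero]
    rw [deriv_const_mul _ ((h1.fun_mul h2).sub_const 1), deriv_sub_const, deriv_fun_mul h1 h2]
  have e2 : deriv (fun z => aV g₁ g₂ z 2) t = deriv g₁ t + deriv g₂ t := by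
    simp only [aV, Matrix.cons_val_two, Matrix.tail_cons, Matrix.head_cons]
    rw [deriv_fun_add h1 h2]
  have e3 : deriv (fun z => aV g₁ g₂ z 3) t
      = Complex.I * (deriv g₁ t - deriv g₂ t) := by
    simp only [aV, Matrix.cons_val_three, Matrix.tail_cons, Matrix.head_cons]
    rw [deriv_const_mul _ (h1.fun_sub h2), deriv_fun_sub h1 h2]
  have cd : (fun k => deriv (fun z => aV g₁ g₂ z k) t)
      = ![deriv g₁ t * g₂ t + g₁ t * deriv g₂ t,
          Complex.I * (deriv g₁ t * g₂ t + g₁ t * deriv g₂ t),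
          deriv g₁ t + deriv g₂ t, Complex.I * (deriv g₁ t - deriv g₂ t)] := by
    funext k; fin_cases k
    · exact e0
    · exact e1
    · exact e2
    · exact e3
  have cs : (fun k => star (aV g₁ g₂ t k))
      = ![(starRingEnd ℂ) (g₁ t) * (starRingEnd ℂ) (g₂ t) + 1,
          -Complex.I * ((starRingEnd ℂ) (g₁ t) * (starRingEnd ℂ) (g₂ t) - 1),
          (starRingEnd ℂ) (g₁ t) + (starRingEnd ℂ) (g₂ t),
          -Complex.I * ((starRingEnd ℂ) (g₁ t) - (starRingEnd ℂ) (g₂ t))] := by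
    funext k; fin_cases k <;> simp [aV, Complex.conj_I] <;> ring
  have cds : (fun k => star (deriv (fun z => aV g₁ g₂ z k) t))
      = ![(starRingEnd ℂ) (deriv g₁ t) * (starRingEnd ℂ) (g₂ t)
            + (starRingEnd ℂ) (g₁ t) * (starRingEnd ℂ) (deriv g₂ t),
          -Complex.I * ((starRingEnd ℂ) (deriv g₁ t) * (starRingEnd ℂ) (g₂ t)
            + (starRingEnd ℂ) (g₁ t) * (starRingEnd ℂ) (deriv g₂ t)),
          (starRingEnd ℂ) (deriv g₁ t) + (starRingEnd ℂ) (deriv g₂ t),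
          -Complex.I * ((starRingEnd ℂ) (deriv g₁ t) - (starRingEnd ℂ) (deriv g₂ t))] := by
    funext k
    have := congrFun cd k
    rw [star_def, this]
    fin_cases k <;> simp [Complex.conj_I] <;> ring
  have hM : (Matrix.of fun i j : Fin 4 =>
        ![aV g₁ g₂ t,
          fun k => star (aV g₁ g₂ t k),
          fun k => deriv (fun z => aV g₁ g₂ z k) t,
          fun k => star (deriv (fun z => aV g₁ g₂ z k) t)] j i)
      = !![g₁ t * g₂ t + 1, (starRingEnd ℂ) (g₁ t) * (starRingEnd ℂ) (g₂ t) + 1,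
            deriv g₁ t * g₂ t + g₁ t * deriv g₂ t,
            (starRingEnd ℂ) (deriv g₁ t) * (starRingEnd ℂ) (g₂ t)
              + (starRingEnd ℂ) (g₁ t) * (starRingEnd ℂ) (deriv g₂ t);
          Complex.I * (g₁ t * g₂ t - 1),
            -Complex.I * ((starRingEnd ℂ) (g₁ t) * (starRingEnd ℂ) (g₂ t) - 1),
            Complex.I * (deriv g₁ t * g₂ t + g₁ t * deriv g₂ t),
            -Complex.I * ((starRingEnd ℂ) (deriv g₁ t) * (starRingEnd ℂ) (g₂ t)
              + (starRingEnd ℂ) (g₁ t) * (starRingEnd ℂ) (deriv g₂ t));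
          g₁ t + g₂ t, (starRingEnd ℂ) (g₁ t) + (starRingEnd ℂ) (g₂ t),
            deriv g₁ t + deriv g₂ t,
            (starRingEnd ℂ) (deriv g₁ t) + (starRingEnd ℂ) (deriv g₂ t);
          Complex.I * (g₁ t - g₂ t),
            -Complex.I * ((starRingEnd ℂ) (g₁ t) - (starRingEnd ℂ) (g₂ t)),
            Complex.I * (deriv g₁ t - deriv g₂ t),
            -Complex.I * ((starRingEnd ℂ) (deriv g₁ t) - (starRingEnd ℂ) (deriv g₂ t))] := by
    simp only [cs, cd, cds]
    ext i j
    fin_cases i <;> fin_cases j <;> simp [aV]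
  rw [hM, key]
  push_cast
  rw [← Complex.mul_conj, ← Complex.mul_conj, ← Complex.mul_conj, ← Complex.mul_conj]
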